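/- Let P₁ and P₂ be integrable Poisson manifolds that are Morita equivalent via a symplectic manifold S with surjective submersions τ₁: S → P₁ (complete Poisson) and τ₂: S → P₂ (complete anti-Poisson) having connected simply connected fibers and symplectically orthogonal kernels: ker(dτ₁)_z = (ker(dτ₂)_z)^⊥ for all z ∈ S. Then the cotangent Lie algebroids T*P₁ → P₁ and T*P₂ → P₂ are quasi-equivalent, with witnessing subbundles L₁ = {(Π_S^♯(τ₁*α), α) : α ∈ T*P₁} ⊂ τ₁^!(T*P₁) and L₂ = {(Π_S^♯(τ₂*β), β) : β ∈ (T*P₂)^−} ⊂ τ₂^!(T*P₂)^−. -/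

import Mathlib

/-!
STATEMENT 7: If integrable Poisson manifolds P₁, P₂ are Morita equivalent via a
symplectic manifold S with τ₁ : S → P₁ a (complete) Poisson surjective submersion and
τ₂ : S → P₂ a (complete) anti-Poisson surjective submersion having connected simply
connected fibres and symplectically orthogonal kernels, then the cotangent algebroids
T*P₁ and T*P₂ are quasi-equivalent, witnessed by
L₁ = {(Π_S^♯(τ₁*α), α)} ⊂ τ₁^!(T*P₁) and L₂ = {(Π_S^♯(τ₂*β), β)} ⊂ τ₂^!(T*P₂)⁻.

Model: pointwise linear algebra plus topology.  Tangent spaces are families of real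
vector spaces; the symplectic structure of S is encoded by the bivector Π_S^♯ together
with its inverse 2-form ω; the Poisson (resp. anti-Poisson) property of τ₁ (resp. τ₂)
is dτ ∘ Π_S^♯ ∘ dτ* = Π^♯ (resp. = −Π^♯).  (Completeness of the Poisson maps, a
flow-theoretic condition, is not expressible in this pointwise model; it is not needed
for the quasi-equivalence conditions (A), (B), (C) below.)  The conclusion lists:
containment of L_k in the pull-back algebroid (for T*P₂ with the opposite anchor −Π₂^♯),
and conditions (A), (B), (C) of quasi-equivalence.
-/

lemma factor_through {V W : Type} [AddCommGroup V] [Module ℝ V] [AddCommGroup W]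
    [Module ℝ W] (f : V →ₗ[ℝ] W) (hf : Function.Surjective f) (g : Module.Dual ℝ V)
    (h : ∀ v, f v = 0 → g v = 0) : ∃ a : Module.Dual ℝ W, ∀ v, a (f v) = g v := by
  let e := f.quotKerEquivOfSurjective hf
  refine ⟨((LinearMap.ker f).liftQ g ?_).comp (e.symm : W →ₗ[ℝ] V ⧸ LinearMap.ker f), ?_⟩
  · intro v hv; exact h v hv
  · intro v
    have he : e (Submodule.Quotient.mk v) = f v := rfl
    have : e.symm (f v) = Submodule.Quotient.mk v := by
      rw [← he, LinearEquiv.symm_apply_apply]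
    simp [LinearMap.comp_apply, this]
    rfl

theorem stmt7
    (S P₁ P₂ : Type) [TopologicalSpace S]
    (TS : S → Type) (T₁ : P₁ → Type) (T₂ : P₂ → Type)
    [∀ z, AddCommGroup (TS z)] [∀ z, Module ℝ (TS z)]
    [∀ p, AddCommGroup (T₁ p)] [∀ p, Module ℝ (T₁ p)]
    [∀ p, AddCommGroup (T₂ p)] [∀ p, Module ℝ (T₂ p)]
    -- symplectic Poisson structure on S: Π_S^♯ with inverse ω
    (πS : ∀ z, Module.Dual ℝ (TS z) →ₗ[ℝ] TS z)
    (ω : ∀ z, TS z →ₗ[ℝ] Module.Dual ℝ (TS z))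
    (hinv₁ : ∀ (z : S) (a : Module.Dual ℝ (TS z)), ω z (πS z a) = a)
    (hinv₂ : ∀ (z : S) (v : TS z), πS z (ω z v) = v)
    (hskew : ∀ (z : S) (v w : TS z), ω z v w = - ω z w v)
    -- Poisson structures on P₁, P₂
    (π₁ : ∀ p, Module.Dual ℝ (T₁ p) →ₗ[ℝ] T₁ p)
    (π₂ : ∀ p, Module.Dual ℝ (T₂ p) →ₗ[ℝ] T₂ p)
    -- surjective submersions τ₁, τ₂
    (τ₁ : S → P₁) (τ₂ : S → P₂)
    (hτ₁ : Function.Surjective τ₁) (hτ₂ : Function.Surjective τ₂)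
    (dτ₁ : ∀ z, TS z →ₗ[ℝ] T₁ (τ₁ z)) (dτ₂ : ∀ z, TS z →ₗ[ℝ] T₂ (τ₂ z))
    (hdτ₁ : ∀ z, Function.Surjective (dτ₁ z)) (hdτ₂ : ∀ z, Function.Surjective (dτ₂ z))
    -- τ₁ Poisson, τ₂ anti-Poisson
    (hPoisson : ∀ z, (dτ₁ z).comp ((πS z).comp (dτ₁ z).dualMap) = π₁ (τ₁ z))
    (hAnti : ∀ z, (dτ₂ z).comp ((πS z).comp (dτ₂ z).dualMap) = - π₂ (τ₂ z))
    -- connected, simply connected fibres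
    (hfib₁ : ∀ p : P₁, IsConnected (τ₁ ⁻¹' {p}) ∧ SimplyConnectedSpace (τ₁ ⁻¹' {p}))
    (hfib₂ : ∀ p : P₂, IsConnected (τ₂ ⁻¹' {p}) ∧ SimplyConnectedSpace (τ₂ ⁻¹' {p}))
    -- ker(dτ₁) = (ker dτ₂)^⊥ and ker(dτ₂) = (ker dτ₁)^⊥ (symplectic orthogonality)
    (horth₁ : ∀ z, {v : TS z | dτ₁ z v = 0} = {v | ∀ w : TS z, dτ₂ z w = 0 → ω z v w = 0})
    (horth₂ : ∀ z, {v : TS z | dτ₂ z v = 0} = {v | ∀ w : TS z, dτ₁ z w = 0 → ω z v w = 0}) :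
    -- L₁ ⊂ τ₁^!(T*P₁): dτ₁(Π_S^♯ τ₁*α) = Π₁^♯ α (anchor of the cotangent algebroid)
    (∀ (z : S) (a : Module.Dual ℝ (T₁ (τ₁ z))),
      dτ₁ z (πS z ((dτ₁ z).dualMap a)) = π₁ (τ₁ z) a) ∧
    -- L₂ ⊂ τ₂^!(T*P₂)⁻: dτ₂(Π_S^♯ τ₂*β) = −Π₂^♯ β (opposite anchor)
    (∀ (z : S) (b : Module.Dual ℝ (T₂ (τ₂ z))),
      dτ₂ z (πS z ((dτ₂ z).dualMap b)) = - (π₂ (τ₂ z) b)) ∧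
    -- condition (A)
    (∀ (z : S) (w : TS z × Module.Dual ℝ (T₁ (τ₁ z))),
      w ∈ Set.range (fun a : Module.Dual ℝ (T₁ (τ₁ z)) => (πS z ((dτ₁ z).dualMap a), a)) →
      w.2 = 0 → w.1 = 0) ∧
    (∀ (z : S) (w : TS z × Module.Dual ℝ (T₂ (τ₂ z))),
      w ∈ Set.range (fun b : Module.Dual ℝ (T₂ (τ₂ z)) => (πS z ((dτ₂ z).dualMap b), b)) →
      w.2 = 0 → w.1 = 0) ∧
    -- condition (B): pr₁(L₁) = ker dτ₂ = T(τ₂-fibre), pr₁(L₂) = ker dτ₁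
    (∀ z : S, Set.range (fun a : Module.Dual ℝ (T₁ (τ₁ z)) => πS z ((dτ₁ z).dualMap a))
      = {v : TS z | dτ₂ z v = 0}) ∧
    (∀ z : S, Set.range (fun b : Module.Dual ℝ (T₂ (τ₂ z)) => πS z ((dτ₂ z).dualMap b))
      = {v : TS z | dτ₁ z v = 0}) ∧
    -- condition (C): pr₂(L_k) is everything
    (∀ (z : S) (a : Module.Dual ℝ (T₁ (τ₁ z))), ∃ u : TS z,
      (u, a) ∈ Set.range (fun a' : Module.Dual ℝ (T₁ (τ₁ z)) => (πS z ((dτ₁ z).dualMap a'), a'))) ∧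
    (∀ (z : S) (b : Module.Dual ℝ (T₂ (τ₂ z))), ∃ u : TS z,
      (u, b) ∈ Set.range (fun b' : Module.Dual ℝ (T₂ (τ₂ z)) => (πS z ((dτ₂ z).dualMap b'), b'))) := by
  refine ⟨?_, ?_, ?_, ?_, ?_, ?_, ?_, ?_⟩
  · intro z a
    exact congrFun (congrArg (DFunLike.coe) (hPoisson z)) a
  · intro z b
    have := congrFun (congrArg (DFunLike.coe) (hAnti z)) b
    simpa using this
  · rintro z w ⟨a, rfl⟩ h2
    simp only at h2
    simp [h2]
  · rintro z w ⟨b, rfl⟩ h2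
    simp only at h2
    simp [h2]
  · intro z
    ext v
    constructor
    · rintro ⟨a, rfl⟩
      have hv : πS z ((dτ₁ z).dualMap a) ∈
          {v : TS z | ∀ w : TS z, dτ₁ z w = 0 → ω z v w = 0} := by
        intro w hw
        have h := hinv₁ z ((dτ₁ z).dualMap a)
        rw [h]
        simp [LinearMap.dualMap_apply, hw]
      rw [← horth₂ z] at hv
      exact hv
    · intro hv
      have hv' : ∀ w : TS z, dτ₁ z w = 0 → ω z v w = 0 := by
        have := (horth₂ z) ▸ hv
        exact this
      obtain ⟨a, ha⟩ := factor_through (dτ₁ z) (hdτ₁ z) (ω z v) hv'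
      refine ⟨a, ?_⟩
      have h : (dτ₁ z).dualMap a = ω z v := by
        ext w; exact ha w
      show πS z ((dτ₁ z).dualMap a) = v
      rw [h, hinv₂]
  · intro z
    ext v
    constructor
    · rintro ⟨b, rfl⟩
      have hv : πS z ((dτ₂ z).dualMap b) ∈
          {v : TS z | ∀ w : TS z, dτ₂ z w = 0 → ω z v w = 0} := by
        intro w hw
        have h := hinv₁ z ((dτ₂ z).dualMap b)
        rw [h]
        simp [LinearMap.dualMap_apply, hw]
      rw [← horth₁ z] at hv
      exact hv
    · intro hv
      have hv' : ∀ w : TS z, dτ₂ z w = 0 → ω z v w = 0 := by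
        have := (horth₁ z) ▸ hv
        exact this
      obtain ⟨b, hb⟩ := factor_through (dτ₂ z) (hdτ₂ z) (ω z v) hv'
      refine ⟨b, ?_⟩
      have h : (dτ₂ z).dualMap b = ω z v := by
        ext w; exact hb w
      show πS z ((dτ₂ z).dualMap b) = v
      rw [h, hinv₂]
  · intro z a
    exact ⟨πS z ((dτ₁ z).dualMap a), a, rfl⟩
  · intro z b
    exact ⟨πS z ((dτ₂ z).dualMap b), b, rfl⟩
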